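/- For α > 0 and n ≥ 1, ∫_0^∞ r_n(x)^2 e^{-x} x^α/(x+α)^2 dx = (α+n) Γ(n+α) / ((α+n-1)(n-1)!), where r_n(x) = -(x+α+1) L_{n-1}^{(α)}(x) + L_{n-2}^{(α)}(x). -/

import Mathlib

open Polynomial MeasureTheory

/-- Classical (generalized) Laguerre polynomials
`L_n^{(α)}(x) = Σ_{k=0}^n (-1)^k C(n+α, n-k) x^k / k!`. -/
noncomputable def laguerreP (α : ℝ) (n : ℕ) : Polynomial ℝ :=
  ∑ k ∈ Finset.range (n + 1),
    C ((-1 : ℝ) ^ k *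
        (∏ i ∈ Finset.range (n - k), (α + (k : ℝ) + 1 + (i : ℝ))) /
        ((Nat.factorial (n - k) : ℝ) * (Nat.factorial k : ℝ))) * X ^ k

/-- `L_k^{(α)}` extended by `0` for `k < 0`. -/
noncomputable def Lz (α : ℝ) (k : ℤ) : Polynomial ℝ :=
  if k < 0 then 0 else laguerreP α k.toNat

/-- Exceptional Laguerre polynomials `r_n = -(x+α+1) L_{n-1}^{(α)} + L_{n-2}^{(α)}`. -/
noncomputable def rE (α : ℝ) (k : ℤ) : Polynomial ℝ :=
  -(X + C (α + 1)) * Lz α (k - 1) + Lz α (k - 2)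

namespace ExcLag

/-- coefficient abbreviation -/
noncomputable def lc (γ : ℝ) (m k : ℕ) : ℝ :=
  (-1 : ℝ) ^ k * (∏ i ∈ Finset.range (m - k), (γ + (k : ℝ) + 1 + (i : ℝ))) /
    ((Nat.factorial (m - k) : ℝ) * (Nat.factorial k : ℝ))

lemma coeff_laguerreP (γ : ℝ) (m k : ℕ) :
    (laguerreP γ m).coeff k = if k ≤ m then lc γ m k else 0 := by
  classical
  rw [laguerreP, Polynomial.finset_sum_coeff]
  simp only [Polynomial.coeff_C_mul, Polynomial.coeff_X_pow, mul_ite, mul_one, mul_zero]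
  rw [Finset.sum_ite_eq]
  simp [Finset.mem_range, Nat.lt_succ_iff, lc]

lemma natDegree_laguerreP_le (γ : ℝ) (m : ℕ) : (laguerreP γ m).natDegree ≤ m := by
  rw [Polynomial.natDegree_le_iff_coeff_eq_zero]
  intro N hN
  rw [coeff_laguerreP, if_neg (by omega)]

lemma coeff_laguerreP_self (γ : ℝ) (m : ℕ) :
    (laguerreP γ m).coeff m = (-1 : ℝ) ^ m / (Nat.factorial m : ℝ) := by
  rw [coeff_laguerreP, if_pos le_rfl, lc]
  simp

lemma laguerreP_zero (γ : ℝ) : laguerreP γ 0 = 1 := by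
  simp [laguerreP]


lemma derivative_laguerreP (γ : ℝ) (m : ℕ) :
    derivative (laguerreP γ (m + 1)) = -laguerreP (γ + 1) m := by
  ext k
  rw [Polynomial.coeff_derivative, Polynomial.coeff_neg, coeff_laguerreP, coeff_laguerreP]
  by_cases hk : k ≤ m
  · rw [if_pos (by omega : k + 1 ≤ m + 1), if_pos hk]
    unfold lc
    have h1 : m + 1 - (k + 1) = m - k := by omega
    rw [h1]
    have h2 : ∏ i ∈ Finset.range (m - k), (γ + ((k + 1 : ℕ) : ℝ) + 1 + (i : ℝ))
        = ∏ i ∈ Finset.range (m - k), (γ + 1 + (k : ℝ) + 1 + (i : ℝ)) := by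
      refine Finset.prod_congr rfl fun i _ => ?_
      push_cast; ring
    rw [h2, Nat.factorial_succ]
    have hf1 : ((Nat.factorial (m - k) : ℝ)) ≠ 0 := Nat.cast_ne_zero.2 (Nat.factorial_ne_zero _)
    have hf2 : ((Nat.factorial k : ℝ)) ≠ 0 := Nat.cast_ne_zero.2 (Nat.factorial_ne_zero _)
    have hf3 : ((k : ℝ) + 1) ≠ 0 := by positivity
    push_cast
    field_simp
    ring
  · rw [if_neg (by omega : ¬ (k + 1 ≤ m + 1)), if_neg hk]
    simp

lemma laguerreP_param_succ (γ : ℝ) (m : ℕ) :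
    laguerreP γ (m + 1) = laguerreP (γ + 1) (m + 1) - laguerreP (γ + 1) m := by
  ext k
  rw [Polynomial.coeff_sub, coeff_laguerreP, coeff_laguerreP, coeff_laguerreP]
  by_cases hk : k ≤ m
  · rw [if_pos (by omega : k ≤ m + 1), if_pos (by omega : k ≤ m + 1), if_pos hk]
    unfold lc
    obtain ⟨e, rfl⟩ : ∃ e, m = k + e := ⟨m - k, by omega⟩
    have h1 : k + e + 1 - k = e + 1 := by omega
    have h2 : k + e - k = e := by omega
    rw [h1, h2]
    rw [Finset.prod_range_succ' (fun i => (γ + (k : ℝ) + 1 + (i : ℝ))) e]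
    rw [Finset.prod_range_succ (fun i => (γ + 1 + (k : ℝ) + 1 + (i : ℝ))) e]
    have h3 : ∏ i ∈ Finset.range e, (γ + (k : ℝ) + 1 + ((i + 1 : ℕ) : ℝ))
        = ∏ i ∈ Finset.range e, (γ + 1 + (k : ℝ) + 1 + (i : ℝ)) := by
      refine Finset.prod_congr rfl fun i _ => ?_
      push_cast; ring
    rw [h3, Nat.factorial_succ e]
    have hf1 : ((Nat.factorial e : ℝ)) ≠ 0 := Nat.cast_ne_zero.2 (Nat.factorial_ne_zero _)
    have hf2 : ((Nat.factorial k : ℝ)) ≠ 0 := Nat.cast_ne_zero.2 (Nat.factorial_ne_zero _)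
    have hf3 : ((e : ℝ) + 1) ≠ 0 := by positivity
    push_cast
    field_simp
    ring
  · by_cases hk2 : k ≤ m + 1
    · have hk3 : k = m + 1 := by omega
      subst hk3
      rw [if_pos le_rfl, if_pos le_rfl, if_neg hk]
      unfold lc
      simp
    · rw [if_neg hk2, if_neg hk2, if_neg hk]
      simp

lemma laguerre_ratio (γ : ℝ) (m k : ℕ) :
    ((k : ℝ) + 1) * (γ + (k : ℝ) + 1) * (laguerreP γ m).coeff (k + 1)
      = -((m : ℝ) - (k : ℝ)) * (laguerreP γ m).coeff k := by
  rw [coeff_laguerreP, coeff_laguerreP]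
  by_cases h1 : k + 1 ≤ m
  · rw [if_pos h1, if_pos (by omega : k ≤ m)]
    unfold lc
    obtain ⟨e, rfl⟩ : ∃ e, m = k + 1 + e := ⟨m - (k + 1), by omega⟩
    have h2 : k + 1 + e - (k + 1) = e := by omega
    have h3 : k + 1 + e - k = e + 1 := by omega
    rw [h2, h3]
    rw [Finset.prod_range_succ' (fun i => (γ + (k : ℝ) + 1 + (i : ℝ))) e]
    have h4 : ∏ i ∈ Finset.range e, (γ + (k : ℝ) + 1 + ((i + 1 : ℕ) : ℝ))
        = ∏ i ∈ Finset.range e, (γ + ((k + 1 : ℕ) : ℝ) + 1 + (i : ℝ)) := by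
      refine Finset.prod_congr rfl fun i _ => ?_
      push_cast; ring
    rw [h4, Nat.factorial_succ e, Nat.factorial_succ k]
    have hf1 : ((Nat.factorial e : ℝ)) ≠ 0 := Nat.cast_ne_zero.2 (Nat.factorial_ne_zero _)
    have hf2 : ((Nat.factorial k : ℝ)) ≠ 0 := Nat.cast_ne_zero.2 (Nat.factorial_ne_zero _)
    have hf3 : ((e : ℝ) + 1) ≠ 0 := by positivity
    have hf4 : ((k : ℝ) + 1) ≠ 0 := by positivity
    push_cast
    field_simp
    ring
  · rw [if_neg h1]
    by_cases h2 : k ≤ m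
    · have h3 : k = m := by omega
      subst h3
      rw [if_pos le_rfl]
      simp
    · rw [if_neg h2]
      simp

lemma laguerre_ode (γ : ℝ) (m : ℕ) :
    X * derivative (derivative (laguerreP γ m))
      + (C (γ + 1) - X) * derivative (laguerreP γ m)
      + C (m : ℝ) * laguerreP γ m = 0 := by
  ext k
  simp only [Polynomial.coeff_add, Polynomial.coeff_zero, Polynomial.coeff_C_mul, sub_mul,
    Polynomial.coeff_sub]
  cases k with
  | zero =>
      have h := laguerre_ratio γ m 0
      simp only [Polynomial.mul_coeff_zero, Polynomial.coeff_X_zero, zero_mul,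
        Polynomial.coeff_derivative, Nat.cast_zero] at h ⊢
      push_cast at h ⊢
      linear_combination h
  | succ k =>
      have h := laguerre_ratio γ m (k + 1)
      rw [Polynomial.coeff_X_mul, Polynomial.coeff_X_mul]
      simp only [Polynomial.coeff_derivative] at h ⊢
      push_cast at h ⊢
      linear_combination h


lemma rE_eq (α : ℝ) (n : ℕ) (hn : 1 ≤ n) :
    rE α (n : ℤ) = (X + C α) * derivative (laguerreP (α - 1) (n - 1))
      - (X + C (α + 1)) * laguerreP (α - 1) (n - 1) := by
  have hsub : α - 1 + 1 = α := by ring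
  match n, hn with
  | 1, _ =>
      simp only [rE, Lz, laguerreP_zero]
      norm_num [laguerreP_zero]
  | (m + 2), _ =>
      have h1 : ((m + 2 : ℕ) : ℤ) - 1 = ((m + 1 : ℕ) : ℤ) := by push_cast; ring
      have h2 : ((m + 2 : ℕ) : ℤ) - 2 = ((m : ℕ) : ℤ) := by push_cast; ring
      have h3 : (m + 2) - 1 = m + 1 := by omega
      rw [rE, h1, h2, h3]
      have hLz1 : Lz α ((m + 1 : ℕ) : ℤ) = laguerreP α (m + 1) := by
        rw [Lz, if_neg (by exact Int.not_lt.mpr (Int.natCast_nonneg _)), Int.toNat_natCast]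
      have hLz2 : Lz α ((m : ℕ) : ℤ) = laguerreP α m := by
        rw [Lz, if_neg (by exact Int.not_lt.mpr (Int.natCast_nonneg _)), Int.toNat_natCast]
      rw [hLz1, hLz2]
      rw [derivative_laguerreP (α - 1) m, hsub]
      rw [laguerreP_param_succ (α - 1) m, hsub]
      rw [C_add, C_1]
      ring

lemma key_poly (α : ℝ) (n : ℕ) (hn : 1 ≤ n) :
    X * (X + C α) * derivative (laguerreP (α - 1) (n - 1) * rE α (n : ℤ))
      + (laguerreP (α - 1) (n - 1) * rE α (n : ℤ)) * ((C α) ^ 2 - X - X ^ 2)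
    = X * (rE α (n : ℤ)) ^ 2
      - (C α + C (n : ℝ)) * ((laguerreP (α - 1) (n - 1)) ^ 2 * (X + C α) ^ 2) := by
  have hode := laguerre_ode (α - 1) (n - 1)
  have hsub : α - 1 + 1 = α := by ring
  rw [hsub] at hode
  have hcast : ((n - 1 : ℕ) : ℝ) = (n : ℝ) - 1 := by
    have := Nat.cast_sub hn (R := ℝ); simpa using this
  rw [hcast] at hode
  rw [rE_eq α n hn]
  rw [C_sub, C_add, C_1] at *
  set B := laguerreP (α - 1) (n - 1) with hB
  simp only [derivative_mul, derivative_sub, derivative_add, derivative_X, derivative_C,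
    derivative_one, Polynomial.derivative_C_mul]
  linear_combination ((X + C α) ^ 2 * B) * hode


lemma comp_X_add_one_coeff (P : Polynomial ℝ) {N : ℕ} (hN : P.natDegree < N) (ℓ : ℕ) :
    (P.comp (X + 1)).coeff ℓ = ∑ k ∈ Finset.range N, P.coeff k * (k.choose ℓ : ℝ) := by
  rw [Polynomial.comp_eq_sum_left, Polynomial.sum_over_range' P (by simp) N hN]
  rw [Polynomial.finset_sum_coeff]
  refine Finset.sum_congr rfl fun k _ => ?_
  rw [Polynomial.coeff_C_mul, Polynomial.coeff_X_add_one_pow]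

lemma finite_diff (m : ℕ) : ∀ P : Polynomial ℝ, P.natDegree ≤ m →
    ∑ j ∈ Finset.range (m + 1), (-1 : ℝ) ^ j * (m.choose j : ℝ) * P.eval (j : ℝ)
      = (-1 : ℝ) ^ m * (m.factorial : ℝ) * P.coeff m := by
  induction m with
  | zero =>
      intro P hP
      simp [← Polynomial.coeff_zero_eq_eval_zero]
  | succ m ih =>
      intro P hP
      set Q : Polynomial ℝ := P - P.comp (X + 1) with hQ
      have hcomp : ∀ ℓ : ℕ, (P.comp (X + 1)).coeff ℓ
          = ∑ k ∈ Finset.range (m + 2), P.coeff k * (k.choose ℓ : ℝ) :=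
        comp_X_add_one_coeff P (by omega)
      have hQdeg : Q.natDegree ≤ m := by
        rw [Polynomial.natDegree_le_iff_coeff_eq_zero]
        intro N hN
        rw [Polynomial.coeff_sub, hcomp N]
        by_cases hN2 : N = m + 1
        · subst hN2
          rw [Finset.sum_eq_single (m + 1)]
          · simp
          · intro k hk hkne
            have hk' := Finset.mem_range.mp hk
            have : k < m + 1 := by omega
            rw [Nat.choose_eq_zero_of_lt this]
            simp
          · intro h; exact absurd (Finset.self_mem_range_succ (m + 1)) h
        · have h1 : P.coeff N = 0 :=
            Polynomial.coeff_eq_zero_of_natDegree_lt (by omega)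
          rw [h1]
          rw [Finset.sum_eq_zero]
          · simp
          · intro k hk
            rw [Finset.mem_range] at hk
            rw [Nat.choose_eq_zero_of_lt (by omega)]
            simp
      have hQcoeff : Q.coeff m = -((m : ℝ) + 1) * P.coeff (m + 1) := by
        rw [Polynomial.coeff_sub, hcomp m]
        rw [Finset.sum_range_succ, Finset.sum_range_succ]
        rw [Finset.sum_eq_zero (fun k hk => by
          rw [Finset.mem_range] at hk
          rw [Nat.choose_eq_zero_of_lt (by omega)]; simp)]
        simp [Nat.choose_succ_self_right]
        ring
      have hQeval : ∀ j : ℕ, Q.eval (j : ℝ) = P.eval (j : ℝ) - P.eval ((j : ℝ) + 1) := by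
        intro j
        simp [hQ, Polynomial.eval_comp]
      -- sum manipulation
      have key : ∑ j ∈ Finset.range (m + 2), (-1 : ℝ) ^ j * ((m + 1).choose j : ℝ) * P.eval (j : ℝ)
          = ∑ j ∈ Finset.range (m + 1), (-1 : ℝ) ^ j * (m.choose j : ℝ) * Q.eval (j : ℝ) := by
        have e1 : ∑ j ∈ Finset.range (m + 2), (-1 : ℝ) ^ j * ((m + 1).choose j : ℝ) * P.eval (j : ℝ)
            = (∑ j ∈ Finset.range (m + 1),
                (-1 : ℝ) ^ (j + 1) * ((m + 1).choose (j + 1) : ℝ) * P.eval ((j + 1 : ℕ) : ℝ))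
              + P.eval ((0 : ℕ) : ℝ) := by
          rw [Finset.sum_range_succ' (fun j => (-1 : ℝ) ^ j * ((m + 1).choose j : ℝ) * P.eval (j : ℝ)) (m + 1)]
          simp
        have e2 : ∀ j : ℕ, (-1 : ℝ) ^ (j + 1) * ((m + 1).choose (j + 1) : ℝ) * P.eval ((j + 1 : ℕ) : ℝ)
            = -((-1 : ℝ) ^ j * (m.choose j : ℝ) * P.eval ((j : ℝ) + 1))
              + (-1 : ℝ) ^ (j + 1) * (m.choose (j + 1) : ℝ) * P.eval ((j + 1 : ℕ) : ℝ) := by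
          intro j
          rw [Nat.choose_succ_succ' m j]
          push_cast
          ring
        rw [e1]
        rw [Finset.sum_congr rfl (fun j _ => e2 j), Finset.sum_add_distrib]
        have e3 : ∑ j ∈ Finset.range (m + 1),
              (-1 : ℝ) ^ (j + 1) * (m.choose (j + 1) : ℝ) * P.eval ((j + 1 : ℕ) : ℝ)
            = ∑ j ∈ Finset.range (m + 2), (-1 : ℝ) ^ j * (m.choose j : ℝ) * P.eval ((j : ℕ) : ℝ)
              - P.eval ((0 : ℕ) : ℝ) := by
          rw [Finset.sum_range_succ' (fun j => (-1 : ℝ) ^ j * (m.choose j : ℝ) * P.eval ((j : ℕ) : ℝ)) (m + 1)]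
          simp
        rw [e3]
        rw [Finset.sum_range_succ (fun j => (-1 : ℝ) ^ j * (m.choose j : ℝ) * P.eval ((j : ℕ) : ℝ)) (m + 1)]
        rw [Nat.choose_succ_self m]
        simp only [hQeval]
        push_cast
        simp only [mul_sub, Finset.sum_sub_distrib, neg_mul, Finset.sum_neg_distrib, zero_mul]
        ring
      rw [key, ih Q hQdeg, hQcoeff]
      rw [Nat.factorial_succ]
      push_cast
      ring


lemma Gamma_add_nat (γ : ℝ) (hγ : 0 < γ) (ℓ : ℕ) :
    Real.Gamma (γ + ℓ) = Real.Gamma γ * ∏ t ∈ Finset.range ℓ, (γ + t) := by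
  induction ℓ with
  | zero => simp
  | succ ℓ ih =>
      have h1 : γ + ((ℓ + 1 : ℕ) : ℝ) = (γ + ℓ) + 1 := by push_cast; ring
      rw [h1, Real.Gamma_add_one (ne_of_gt (by have h0 : (0:ℝ) ≤ (ℓ:ℝ) := Nat.cast_nonneg ℓ; linarith)),
        ih, Finset.prod_range_succ]
      ring

lemma integrableOn_monomial (γ : ℝ) (hγ : 0 < γ + 1) (k : ℕ) :
    IntegrableOn (fun x : ℝ => x ^ k * (Real.exp (-x) * x ^ γ)) (Set.Ioi 0) := by
  have h := Real.GammaIntegral_convergent (s := γ + k + 1)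
    (by have h0 : (0:ℝ) ≤ (k:ℝ) := Nat.cast_nonneg k; linarith)
  refine h.congr_fun (fun x hx => ?_) measurableSet_Ioi
  have hx0 : (0:ℝ) < x := hx
  dsimp only
  rw [show γ + (k:ℝ) + 1 - 1 = γ + k from by ring, Real.rpow_add hx0, Real.rpow_natCast]
  ring

lemma integral_monomial (γ : ℝ) (hγ : 0 < γ + 1) (k : ℕ) :
    ∫ x in Set.Ioi (0:ℝ), x ^ k * (Real.exp (-x) * x ^ γ) = Real.Gamma (γ + k + 1) := by
  rw [Real.Gamma_eq_integral (by have h0 : (0:ℝ) ≤ (k:ℝ) := Nat.cast_nonneg k; linarith)]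
  refine setIntegral_congr_fun measurableSet_Ioi fun x hx => ?_
  have hx0 : (0:ℝ) < x := hx
  rw [show γ + (k:ℝ) + 1 - 1 = γ + k from by ring, Real.rpow_add hx0, Real.rpow_natCast]
  ring

lemma poly_mul_w_eq (p : Polynomial ℝ) (γ : ℝ) (x : ℝ) :
    p.eval x * (Real.exp (-x) * x ^ γ)
      = ∑ k ∈ Finset.range (p.natDegree + 1), p.coeff k * (x ^ k * (Real.exp (-x) * x ^ γ)) := by
  rw [Polynomial.eval_eq_sum_range, Finset.sum_mul]
  exact Finset.sum_congr rfl fun k _ => by ring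

lemma integrableOn_poly (γ : ℝ) (hγ : 0 < γ + 1) (p : Polynomial ℝ) :
    IntegrableOn (fun x : ℝ => p.eval x * (Real.exp (-x) * x ^ γ)) (Set.Ioi 0) := by
  have h : (fun x : ℝ => p.eval x * (Real.exp (-x) * x ^ γ))
      = fun x => ∑ k ∈ Finset.range (p.natDegree + 1), p.coeff k * (x ^ k * (Real.exp (-x) * x ^ γ)) :=
    funext (poly_mul_w_eq p γ)
  rw [h]
  exact integrable_finset_sum _ fun k _ => ((integrableOn_monomial γ hγ k).const_mul _)

lemma integral_poly (γ : ℝ) (hγ : 0 < γ + 1) (p : Polynomial ℝ) :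
    ∫ x in Set.Ioi (0:ℝ), p.eval x * (Real.exp (-x) * x ^ γ)
      = ∑ k ∈ Finset.range (p.natDegree + 1), p.coeff k * Real.Gamma (γ + k + 1) := by
  rw [setIntegral_congr_fun measurableSet_Ioi (fun x _ => poly_mul_w_eq p γ x)]
  rw [integral_finset_sum _ fun k _ => ((integrableOn_monomial γ hγ k).const_mul _)]
  exact Finset.sum_congr rfl fun k _ => by
    rw [MeasureTheory.integral_const_mul, integral_monomial γ hγ k]

lemma sum_lc_gamma (γ : ℝ) (hγ : 0 < γ + 1) (m k : ℕ) (hk : k ≤ m) :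
    ∑ j ∈ Finset.range (m + 1), lc γ m j * Real.Gamma (γ + ((k + j : ℕ) : ℝ) + 1)
      = if k = m then (-1:ℝ)^m * Real.Gamma (γ + m + 1) else 0 := by
  set f : ℕ → ℝ := fun t => γ + 1 + t with hf
  set Gp : Polynomial ℝ := ∏ s ∈ Finset.range k, (X + C (γ + 1 + s)) with hGp
  have hGpmonic : Gp.Monic := monic_prod_of_monic _ _ fun s _ => monic_X_add_C _
  have hGpdeg : Gp.natDegree = k := by
    rw [hGp, Polynomial.natDegree_prod _ _ (fun s _ => (monic_X_add_C _).ne_zero)]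
    simp only [Polynomial.natDegree_X_add_C, Finset.sum_const, smul_eq_mul, mul_one,
      Finset.card_range]
  have hGpeval : ∀ j : ℕ, Gp.eval (j : ℝ) = ∏ t ∈ Finset.range k, f (j + t) := by
    intro j
    rw [hGp, Polynomial.eval_prod]
    refine Finset.prod_congr rfl fun t _ => ?_
    simp only [Polynomial.eval_add, Polynomial.eval_X, Polynomial.eval_C, hf]
    push_cast
    ring
  have hΓm : Real.Gamma (γ + (m:ℝ) + 1) = Real.Gamma (γ+1) * ∏ t ∈ Finset.range m, f t := by
    rw [show γ + (m:ℝ) + 1 = (γ+1) + (m:ℝ) from by ring, Gamma_add_nat (γ+1) hγ m]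
  have hterm : ∀ j ∈ Finset.range (m + 1),
      lc γ m j * Real.Gamma (γ + ((k + j : ℕ) : ℝ) + 1)
      = (Real.Gamma (γ+1) * (∏ t ∈ Finset.range m, f t) / (Nat.factorial m : ℝ))
        * ((-1:ℝ)^j * (m.choose j : ℝ) * Gp.eval (j : ℝ)) := by
    intro j hj
    have hjm : j ≤ m := Nat.lt_succ_iff.mp (Finset.mem_range.mp hj)
    have hΓ : Real.Gamma (γ + ((k + j : ℕ) : ℝ) + 1)
        = Real.Gamma (γ+1) * ∏ t ∈ Finset.range (k + j), f t := by
      rw [show γ + ((k + j : ℕ) : ℝ) + 1 = (γ+1) + ((k + j : ℕ) : ℝ) from by push_cast; ring]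
      exact Gamma_add_nat (γ+1) hγ (k+j)
    have hp1 : ∏ i ∈ Finset.range (m - j), (γ + (j:ℝ) + 1 + (i:ℝ))
        = ∏ i ∈ Finset.range (m - j), f (j + i) := by
      refine Finset.prod_congr rfl fun i _ => ?_
      simp only [hf]; push_cast; ring
    have hp2 : (∏ t ∈ Finset.range j, f t) * (∏ i ∈ Finset.range (m - j), f (j + i))
        = ∏ t ∈ Finset.range m, f t := by
      rw [← Finset.prod_range_add f j (m - j), show j + (m - j) = m from by omega]
    have hp3 : ∏ t ∈ Finset.range (k + j), f t
        = (∏ t ∈ Finset.range j, f t) * (∏ t ∈ Finset.range k, f (j + t)) := by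
      rw [show k + j = j + k from by ring, Finset.prod_range_add]
    have hchoose : ((m.choose j : ℝ)) * (Nat.factorial j : ℝ) * (Nat.factorial (m-j) : ℝ)
        = (Nat.factorial m : ℝ) := by
      exact_mod_cast congrArg (Nat.cast (R := ℝ)) (Nat.choose_mul_factorial_mul_factorial hjm)
    have hf1 : ((Nat.factorial (m - j) : ℝ)) ≠ 0 := Nat.cast_ne_zero.2 (Nat.factorial_ne_zero _)
    have hf2 : ((Nat.factorial j : ℝ)) ≠ 0 := Nat.cast_ne_zero.2 (Nat.factorial_ne_zero _)
    have hf3 : ((Nat.factorial m : ℝ)) ≠ 0 := Nat.cast_ne_zero.2 (Nat.factorial_ne_zero _)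
    unfold lc
    rw [hΓ, hGpeval j, hp1, hp3, ← hp2]
    rw [← hchoose]
    have hc0 : ((m.choose j : ℝ)) ≠ 0 := Nat.cast_ne_zero.2 (Nat.choose_pos hjm).ne'
    field_simp
  rw [Finset.sum_congr rfl hterm, ← Finset.mul_sum]
  rw [finite_diff m Gp (by rw [hGpdeg]; exact hk)]
  by_cases hkm : k = m
  · subst hkm
    have hc1 : Gp.coeff k = 1 := by
      have := hGpmonic.coeff_natDegree
      rwa [hGpdeg] at this
    rw [if_pos rfl, hc1, hΓm]
    have hf3 : ((Nat.factorial k : ℝ)) ≠ 0 := Nat.cast_ne_zero.2 (Nat.factorial_ne_zero _)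
    field_simp
  · have hc0 : Gp.coeff m = 0 :=
      Polynomial.coeff_eq_zero_of_natDegree_lt (by rw [hGpdeg]; omega)
    rw [if_neg hkm, hc0]
    ring


lemma integral_monomial_laguerre (γ : ℝ) (hγ : 0 < γ + 1) (m k : ℕ) (hk : k ≤ m) :
    ∫ x in Set.Ioi (0:ℝ), (x ^ k * (laguerreP γ m).eval x) * (Real.exp (-x) * x ^ γ)
      = if k = m then (-1:ℝ)^m * Real.Gamma (γ + m + 1) else 0 := by
  have heval : ∀ x : ℝ, (x ^ k * (laguerreP γ m).eval x) * (Real.exp (-x) * x ^ γ)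
      = ∑ j ∈ Finset.range (m+1), lc γ m j * (x ^ (k+j) * (Real.exp (-x) * x ^ γ)) := by
    intro x
    rw [laguerreP, Polynomial.eval_finset_sum]
    simp only [Polynomial.eval_mul, Polynomial.eval_C, Polynomial.eval_pow, Polynomial.eval_X]
    rw [Finset.mul_sum, Finset.sum_mul]
    refine Finset.sum_congr rfl fun j _ => ?_
    unfold lc
    rw [pow_add]
    ring
  rw [setIntegral_congr_fun measurableSet_Ioi (fun x _ => heval x)]
  rw [integral_finset_sum _ fun j _ => ((integrableOn_monomial γ hγ (k+j)).const_mul _)]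
  rw [Finset.sum_congr rfl (fun j _ => by
    rw [MeasureTheory.integral_const_mul, integral_monomial γ hγ (k+j)])]
  exact sum_lc_gamma γ hγ m k hk

lemma integral_poly_mul_laguerre (γ : ℝ) (hγ : 0 < γ + 1) (m : ℕ) (p : Polynomial ℝ)
    (hp : p.natDegree ≤ m) :
    ∫ x in Set.Ioi (0:ℝ), (p.eval x * (laguerreP γ m).eval x) * (Real.exp (-x) * x ^ γ)
      = p.coeff m * ((-1:ℝ)^m * Real.Gamma (γ + m + 1)) := by
  have heval : ∀ x : ℝ, (p.eval x * (laguerreP γ m).eval x) * (Real.exp (-x) * x ^ γ)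
      = ∑ j ∈ Finset.range (m+1),
          p.coeff j * ((x ^ j * (laguerreP γ m).eval x) * (Real.exp (-x) * x ^ γ)) := by
    intro x
    rw [Polynomial.eval_eq_sum_range' (Nat.lt_succ_of_le hp), Finset.sum_mul, Finset.sum_mul]
    exact Finset.sum_congr rfl fun j _ => by ring
  rw [setIntegral_congr_fun measurableSet_Ioi (fun x _ => heval x)]
  have hint : ∀ j : ℕ, IntegrableOn
      (fun x : ℝ => (x ^ j * (laguerreP γ m).eval x) * (Real.exp (-x) * x ^ γ)) (Set.Ioi 0) := by
    intro j
    have h := integrableOn_poly γ hγ (X ^ j * laguerreP γ m)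
    refine h.congr_fun (fun x hx => ?_) measurableSet_Ioi
    simp [Polynomial.eval_mul, Polynomial.eval_pow]
  rw [integral_finset_sum _ fun j _ => ((hint j).const_mul _)]
  rw [Finset.sum_congr rfl (fun j hj => by
    rw [MeasureTheory.integral_const_mul,
      integral_monomial_laguerre γ hγ m j (Nat.lt_succ_iff.mp (Finset.mem_range.mp hj))])]
  rw [Finset.sum_eq_single m]
  · rw [if_pos rfl]
  · intro j hj hjne
    rw [if_neg hjne]
    ring
  · intro h
    exact absurd (Finset.self_mem_range_succ m) h

lemma integral_laguerre_sq (γ : ℝ) (hγ : 0 < γ + 1) (m : ℕ) :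
    ∫ x in Set.Ioi (0:ℝ), ((laguerreP γ m).eval x)^2 * (Real.exp (-x) * x ^ γ)
      = Real.Gamma (γ + m + 1) / (Nat.factorial m : ℝ) := by
  have h := integral_poly_mul_laguerre γ hγ m (laguerreP γ m) (natDegree_laguerreP_le γ m)
  have heval : ∀ x : ℝ, ((laguerreP γ m).eval x)^2 * (Real.exp (-x) * x ^ γ)
      = ((laguerreP γ m).eval x * (laguerreP γ m).eval x) * (Real.exp (-x) * x ^ γ) :=
    fun x => by ring
  rw [setIntegral_congr_fun measurableSet_Ioi (fun x _ => heval x), h, coeff_laguerreP_self]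
  have key : ((-1:ℝ)^m) * ((-1:ℝ)^m) = 1 := by
    rw [← pow_add, ← two_mul, pow_mul]
    norm_num
  have hf3 : ((Nat.factorial m : ℝ)) ≠ 0 := Nat.cast_ne_zero.2 (Nat.factorial_ne_zero _)
  field_simp
  linear_combination (Real.Gamma (γ + ↑m + 1)) * key


lemma tendsto_polyexp (Q : Polynomial ℝ) (α : ℝ) :
    Filter.Tendsto (fun x : ℝ => Q.eval x * (Real.exp (-x) * x ^ α)) Filter.atTop (nhds 0) := by
  have hsum : Filter.Tendsto
      (fun x : ℝ => ∑ k ∈ Finset.range (Q.natDegree + 1),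
        Q.coeff k * (x ^ ((k:ℝ) + α) * Real.exp (-(1:ℝ) * x))) Filter.atTop (nhds 0) := by
    have h0 : Filter.Tendsto
        (fun x : ℝ => ∑ k ∈ Finset.range (Q.natDegree + 1),
          Q.coeff k * (x ^ ((k:ℝ) + α) * Real.exp (-(1:ℝ) * x))) Filter.atTop
        (nhds (∑ k ∈ Finset.range (Q.natDegree + 1), Q.coeff k * 0)) := by
      apply tendsto_finset_sum
      intro k _
      exact (tendsto_rpow_mul_exp_neg_mul_atTop_nhds_zero ((k:ℝ) + α) 1 one_pos).const_mul _
    simpa using h0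
  apply hsum.congr'
  filter_upwards [Filter.eventually_gt_atTop (0:ℝ)] with x hx
  rw [Polynomial.eval_eq_sum_range, Finset.sum_mul]
  refine Finset.sum_congr rfl fun k _ => ?_
  rw [Real.rpow_add hx, Real.rpow_natCast]
  norm_num
  ring

end ExcLag


/-- the squared norm of `r_n` with respect to `e^{-x} x^α/(x+α)²` equals
`(α+n) Γ(n+α) / ((α+n-1)(n-1)!)`. -/
theorem exceptional_laguerre_norm (α : ℝ) (hα : 0 < α) (n : ℕ) (hn : 1 ≤ n) :
    ∫ x in Set.Ioi (0 : ℝ), ((rE α (n : ℤ)).eval x) ^ 2 *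
      (Real.exp (-x) * x ^ α / (x + α) ^ 2)
      = (α + n) * Real.Gamma ((n : ℝ) + α) /
        ((α + (n : ℝ) - 1) * (Nat.factorial (n - 1) : ℝ)) := by
  classical
  open ExcLag in
  set B : Polynomial ℝ := laguerreP (α - 1) (n - 1) with hB
  set R : Polynomial ℝ := rE α (n : ℤ) with hR
  have hα1 : 0 < (α - 1) + 1 := by linarith
  have hn1 : (1:ℝ) ≤ (n:ℝ) := by exact_mod_cast hn
  have hB2w : IntegrableOn
      (fun x : ℝ => (B.eval x)^2 * (Real.exp (-x) * x ^ (α - 1))) (Set.Ioi 0) := by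
    have h := ExcLag.integrableOn_poly (α - 1) hα1 (B * B)
    refine h.congr_fun (fun x hx => ?_) measurableSet_Ioi
    simp only [Polynomial.eval_mul]
    ring
  have hR2w : IntegrableOn
      (fun x : ℝ => (R.eval x)^2 * (Real.exp (-x) * x ^ α)) (Set.Ioi 0) := by
    have h := ExcLag.integrableOn_poly α (by linarith) (R * R)
    refine h.congr_fun (fun x hx => ?_) measurableSet_Ioi
    simp only [Polynomial.eval_mul]
    ring
  have hf_int : IntegrableOn
      (fun x : ℝ => (R.eval x)^2 * (Real.exp (-x) * x ^ α / (x + α)^2)) (Set.Ioi 0) := by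
    refine Integrable.mono' (hR2w.const_mul (1/α^2)) ?_ ?_
    · refine ContinuousOn.aestronglyMeasurable ?_ measurableSet_Ioi
      intro x hx
      have hx0 : (0:ℝ) < x := hx
      have c1 : ContinuousAt (fun y : ℝ => (R.eval y)^2) x :=
        ((R.continuous_aeval).pow 2).continuousAt
      have c2 : ContinuousAt (fun y : ℝ => Real.exp (-y)) x :=
        (Real.continuous_exp.comp continuous_neg).continuousAt
      have c3 : ContinuousAt (fun y : ℝ => y ^ α) x :=
        Real.continuousAt_rpow_const x α (Or.inl hx0.ne')
      have c4 : ContinuousAt (fun y : ℝ => (y + α)^2) x :=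
        ((continuous_id.add continuous_const).pow 2).continuousAt
      have c5 : (x+α)^2 ≠ 0 := by positivity
      exact (c1.mul ((c2.mul c3).div c4 c5)).continuousWithinAt
    · filter_upwards [MeasureTheory.ae_restrict_mem measurableSet_Ioi] with x hx
      have hx0 : (0:ℝ) < x := hx
      have h1 : 0 ≤ (R.eval x)^2 * (Real.exp (-x) * x ^ α / (x+α)^2) := by positivity
      rw [Real.norm_eq_abs, abs_of_nonneg h1]
      have h2 : α^2 ≤ (x+α)^2 := by nlinarith
      have h3 : Real.exp (-x) * x ^ α / (x+α)^2 ≤ Real.exp (-x) * x ^ α / α^2 := by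
        gcongr
      calc (R.eval x)^2 * (Real.exp (-x) * x ^ α / (x+α)^2)
          ≤ (R.eval x)^2 * (Real.exp (-x) * x ^ α / α^2) :=
            mul_le_mul_of_nonneg_left h3 (sq_nonneg _)
        _ = 1/α^2 * ((R.eval x)^2 * (Real.exp (-x) * x ^ α)) := by ring
  have hkey := ExcLag.key_poly α n hn
  rw [← hB, ← hR] at hkey
  have hderiv : ∀ x ∈ Set.Ioi (0:ℝ), HasDerivAt
      (fun y : ℝ => (B * R).eval y * (Real.exp (-y) * y ^ α / (y + α)))
      ((R.eval x)^2 * (Real.exp (-x) * x ^ α / (x + α)^2)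
        - (α + n) * ((B.eval x)^2 * (Real.exp (-x) * x ^ (α - 1)))) x := by
    intro x hx
    have hx0 : (0:ℝ) < x := hx
    have hxα : x + α ≠ 0 := by positivity
    have hP : HasDerivAt (fun y : ℝ => (B * R).eval y) ((derivative (B * R)).eval x) x :=
      (B * R).hasDerivAt x
    have hexp : HasDerivAt (fun y : ℝ => Real.exp (-y)) (-Real.exp (-x)) x := by
      simpa using (hasDerivAt_neg x).exp
    have hrpow : HasDerivAt (fun y : ℝ => y ^ α) (α * x ^ (α - 1)) x :=
      Real.hasDerivAt_rpow_const (Or.inl hx0.ne')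
    have hden : HasDerivAt (fun y : ℝ => y + α) 1 x := (hasDerivAt_id x).add_const α
    have hv : HasDerivAt (fun y : ℝ => Real.exp (-y) * y ^ α / (y + α))
        ((((-Real.exp (-x)) * x ^ α + Real.exp (-x) * (α * x ^ (α - 1))) * (x + α)
          - Real.exp (-x) * x ^ α * 1) / (x + α)^2) x :=
      (hexp.mul hrpow).div hden hxα
    have hG := hP.mul hv
    refine hG.congr_deriv ?_
    symm
    have hkx := congrArg (fun p : Polynomial ℝ => p.eval x) hkey
    simp only [Polynomial.eval_add, Polynomial.eval_mul, Polynomial.eval_sub, Polynomial.eval_pow,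
      Polynomial.eval_X, Polynomial.eval_C, Polynomial.eval_one] at hkx
    have hxrw : x ^ α = x ^ (α - 1) * x := by
      rw [← Real.rpow_add_one hx0.ne' (α - 1)]
      norm_num
    have hD : (derivative (B * R)).eval x * (Real.exp (-x) * x ^ α / (x + α))
        + (B * R).eval x * ((((-Real.exp (-x)) * x ^ α + Real.exp (-x) * (α * x ^ (α - 1))) * (x + α)
          - Real.exp (-x) * x ^ α * 1) / (x + α)^2)
        = (x * (x + α) * (derivative (B * R)).eval x
            + (B.eval x * R.eval x) * (α^2 - x - x^2))
            * (Real.exp (-x) * x ^ (α - 1)) / (x + α)^2 := by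
      rw [hxrw]
      simp only [Polynomial.eval_mul]
      field_simp
      ring
    have hFH : (R.eval x)^2 * (Real.exp (-x) * x ^ α / (x + α)^2)
        - (α + n) * ((B.eval x)^2 * (Real.exp (-x) * x ^ (α - 1)))
        = (x * (R.eval x)^2 - (α + n) * ((B.eval x)^2 * (x + α)^2))
            * (Real.exp (-x) * x ^ (α - 1)) / (x + α)^2 := by
      rw [hxrw]
      field_simp
    rw [hFH, hD]
    linear_combination (-(Real.exp (-x) * x ^ (α - 1)) / (x + α)^2) * hkx
  have hG0 : (B * R).eval 0 * (Real.exp (-(0:ℝ)) * (0:ℝ) ^ α / ((0:ℝ) + α)) = 0 := by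
    rw [Real.zero_rpow hα.ne']
    simp
  have hcont : ContinuousWithinAt
      (fun y : ℝ => (B * R).eval y * (Real.exp (-y) * y ^ α / (y + α))) (Set.Ici 0) 0 := by
    apply ContinuousAt.continuousWithinAt
    have c1 : ContinuousAt (fun y : ℝ => (B * R).eval y) 0 :=
      ((B * R).continuous_aeval).continuousAt
    have c2 : ContinuousAt (fun y : ℝ => Real.exp (-y)) 0 :=
      (Real.continuous_exp.comp continuous_neg).continuousAt
    have c3 : ContinuousAt (fun y : ℝ => y ^ α) 0 :=
      Real.continuousAt_rpow_const 0 α (Or.inr hα.le)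
    have c4 : ContinuousAt (fun y : ℝ => y + α) 0 :=
      (continuous_id.add continuous_const).continuousAt
    have c5 : (0:ℝ) + α ≠ 0 := by simpa using hα.ne'
    exact c1.mul ((c2.mul c3).div c4 c5)
  have htop : Filter.Tendsto
      (fun y : ℝ => (B * R).eval y * (Real.exp (-y) * y ^ α / (y + α)))
      Filter.atTop (nhds 0) := by
    have h1 := ExcLag.tendsto_polyexp (B * R) α
    have h2 : Filter.Tendsto (fun x : ℝ => (x + α)⁻¹) Filter.atTop (nhds 0) :=
      (Filter.tendsto_atTop_add_const_right _ α Filter.tendsto_id).inv_tendsto_atTop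
    have h3 := h1.mul h2
    rw [zero_mul] at h3
    exact h3.congr fun x => by ring
  have hsub_int : IntegrableOn
      (fun x : ℝ => (R.eval x)^2 * (Real.exp (-x) * x ^ α / (x + α)^2)
        - (α + n) * ((B.eval x)^2 * (Real.exp (-x) * x ^ (α - 1)))) (Set.Ioi 0) :=
    hf_int.sub (hB2w.const_mul _)
  have hFTC := integral_Ioi_of_hasDerivAt_of_tendsto hcont hderiv hsub_int htop
  rw [hG0, sub_zero] at hFTC
  have hsplit : ∫ x in Set.Ioi (0:ℝ), (R.eval x)^2 * (Real.exp (-x) * x ^ α / (x + α)^2)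
      = (∫ x in Set.Ioi (0:ℝ), ((R.eval x)^2 * (Real.exp (-x) * x ^ α / (x + α)^2)
          - (α + n) * ((B.eval x)^2 * (Real.exp (-x) * x ^ (α - 1)))))
        + ∫ x in Set.Ioi (0:ℝ), (α + n) * ((B.eval x)^2 * (Real.exp (-x) * x ^ (α - 1))) := by
    rw [← MeasureTheory.integral_add hsub_int (hB2w.const_mul _)]
    refine setIntegral_congr_fun measurableSet_Ioi fun x _ => ?_
    ring
  have hBnorm : ∫ x in Set.Ioi (0:ℝ), ((B.eval x)^2 * (Real.exp (-x) * x ^ (α - 1)))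
      = Real.Gamma ((α - 1) + (n - 1 : ℕ) + 1) / (Nat.factorial (n - 1) : ℝ) := by
    have h := ExcLag.integral_laguerre_sq (α - 1) hα1 (n - 1)
    rw [← hB] at h
    exact h
  have hcast : ((n - 1 : ℕ) : ℝ) = (n : ℝ) - 1 := by
    have := Nat.cast_sub hn (R := ℝ)
    simpa using this
  have hargs : (α - 1) + ((n - 1 : ℕ) : ℝ) + 1 = α + (n:ℝ) - 1 := by
    rw [hcast]; ring
  have hpos : 0 < α + (n:ℝ) - 1 := by linarith
  have hΓ : Real.Gamma ((n : ℝ) + α) = (α + (n:ℝ) - 1) * Real.Gamma (α + (n:ℝ) - 1) := by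
    rw [show (n : ℝ) + α = (α + (n:ℝ) - 1) + 1 from by ring]
    exact Real.Gamma_add_one hpos.ne'
  rw [hsplit, hFTC, zero_add, MeasureTheory.integral_const_mul, hBnorm, hargs, hΓ]
  have hfac : ((Nat.factorial (n-1) : ℝ)) ≠ 0 := Nat.cast_ne_zero.2 (Nat.factorial_ne_zero _)
  field_simp
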